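/- O(1/k) iteration complexity of iBPG at the last iterate: under the standing assumptions, if Σ_k k·η_k(‖x̃^{k+1}‖+‖x̃^k‖+1) < ∞, Σ_k k·μ_k < ∞, Σ_k k·ν_k < ∞, and the problem inf{F(x) : x ∈ Q} has an optimal solution x* ∈ dom φ, then there exists a constant C ≥ 0 such that F(x̃^k) − F* ≤ C/k for all k ≥ 1. -/

import Mathlib

open Filter Topology RealInnerProductSpace

/-- The Bregman distance associated with the kernel `φ` whose gradient map is `gφ`. -/
noncomputable def breg {E : Type*} [NormedAddCommGroup E] [InnerProductSpace ℝ E]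
    (φ : E → ℝ) (gφ : E → E) (x y : E) : ℝ :=
  φ x - φ y - ⟪gφ y, x - y⟫

/-- The ν-subdifferential of `P` (a proper function with effective domain `domP`) at `x`. -/
def nuSubdiff {E : Type*} [NormedAddCommGroup E] [InnerProductSpace ℝ E]
    (P : E → ℝ) (domP : Set E) (ν : ℝ) (x : E) : Set E :=
  {d : E | ∀ u ∈ domP, P x + ⟪d, u - x⟫ - ν ≤ P u}

open Classical in
/-- Extension of a real-valued function with effective domain `dom` to an `EReal`-valued
function taking the value `⊤` outside `dom`. -/
noncomputable def extFun {E : Type*} (g : E → ℝ) (dom : Set E) : E → EReal :=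
  fun x => if x ∈ dom then (g x : EReal) else ⊤

section Aux

variable {E : Type*} [NormedAddCommGroup E] [InnerProductSpace ℝ E]

lemma three_point (φ : E → ℝ) (gφ : E → E) (a b c u : E) :
    ⟪gφ a - gφ b, u - c⟫ =
      breg φ gφ u b - breg φ gφ u a - breg φ gφ c b + breg φ gφ c a := by
  simp only [breg, inner_sub_left, inner_sub_right]
  ring

lemma grad_ineq [CompleteSpace E] {s : Set E} {g : E → ℝ} (hg : ConvexOn ℝ s g) {x u g' : E}
    (hx : x ∈ s) (hu : u ∈ s) (hd : HasGradientAt g g' x) :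
    g x + ⟪g', u - x⟫ ≤ g u := by
  set l : ℝ → E := fun t => x + t • (u - x) with hl
  have hline : HasDerivAt l (u - x) 0 := by
    simpa [hl] using ((hasDerivAt_id (0:ℝ)).smul_const (u - x)).const_add x
  have hl0 : l 0 = x := by simp [hl]
  have hcomp : HasDerivAt (g ∘ l) ⟪g', u - x⟫ 0 := by
    have hfd := hd.hasFDerivAt
    rw [← hl0] at hfd
    have := hfd.comp_hasDerivAt 0 hline
    simpa using this
  have hslope : Filter.Tendsto (slope (g ∘ l) 0) (𝓝[>] 0) (𝓝 ⟪g', u - x⟫) :=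
    (hasDerivAt_iff_tendsto_slope.mp hcomp).mono_left
      (nhdsWithin_mono 0 (fun t ht => ne_of_gt ht))
  have hbound : ∀ t ∈ Set.Ioc (0:ℝ) 1, slope (g ∘ l) 0 t ≤ g u - g x := by
    intro t ht
    have hcvx := hg.2 hx hu (by linarith [ht.2] : (0:ℝ) ≤ 1 - t) (le_of_lt ht.1) (by ring)
    have hpt : (1 - t) • x + t • u = l t := by
      simp only [hl, smul_sub, sub_smul, one_smul]; abel
    rw [hpt] at hcvx
    have hsl : slope (g ∘ l) 0 t = (g (l t) - g x) / t := by
      simp [slope, hl0, Function.comp, div_eq_inv_mul]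
    rw [hsl, div_le_iff₀ ht.1]
    simp only [smul_eq_mul] at hcvx
    nlinarith [hcvx]
  have hIoc : Set.Ioc (0:ℝ) 1 ∈ 𝓝[>] (0:ℝ) :=
    Ioc_mem_nhdsGT_of_mem ⟨le_refl 0, zero_lt_one⟩
  have := le_of_tendsto hslope (Filter.eventually_of_mem hIoc hbound)
  linarith

lemma wsum_le_tsum (c : ℕ → ℝ) (hc : ∀ m, 0 ≤ c m)
    (h : Summable (fun m : ℕ => (m:ℝ) * c m)) (n : ℕ) :
    ∑ i ∈ Finset.range n, (i:ℝ) * c i ≤ ∑' m : ℕ, (m:ℝ) * c m :=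
  Summable.sum_le_tsum (Finset.range n) (fun i _ => mul_nonneg i.cast_nonneg (hc i)) h

lemma shift_sum_le_tsum (c : ℕ → ℝ) (hc : ∀ m, 0 ≤ c m) (h : Summable c) (n : ℕ) :
    ∑ i ∈ Finset.range n, c (i+1) ≤ ∑' m : ℕ, c m := by
  have h2 := Summable.sum_le_tsum (Finset.range (n+1)) (fun i _ => hc i) h
  rw [Finset.sum_range_succ'] at h2
  linarith [hc 0]

lemma plain_sum_le (c : ℕ → ℝ) (hc : ∀ m, 0 ≤ c m)
    (h : Summable (fun m : ℕ => (m:ℝ) * c m)) (n : ℕ) :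
    ∑ i ∈ Finset.range n, c i ≤ c 0 + ∑' m : ℕ, (m:ℝ) * c m := by
  have hT : 0 ≤ ∑' m : ℕ, (m:ℝ) * c m :=
    tsum_nonneg (fun m => mul_nonneg m.cast_nonneg (hc m))
  cases n with
  | zero => simpa using add_nonneg (hc 0) hT
  | succ n =>
    rw [Finset.sum_range_succ']
    have h1 : ∀ i ∈ Finset.range n, c (i+1) ≤ (((i+1 : ℕ)):ℝ) * c (i+1) := by
      intro i _
      have : (1:ℝ) ≤ ((i+1 : ℕ):ℝ) := by exact_mod_cast Nat.one_le_iff_ne_zero.mpr (Nat.succ_ne_zero i)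
      nlinarith [hc (i+1)]
    have h2 : ∑ i ∈ Finset.range n, c (i+1)
        ≤ ∑ i ∈ Finset.range n, (((i+1 : ℕ)):ℝ) * c (i+1) := Finset.sum_le_sum h1
    have h3 : ∑ i ∈ Finset.range n, (((i+1 : ℕ)):ℝ) * c (i+1) ≤ ∑' m : ℕ, (m:ℝ) * c m :=
      shift_sum_le_tsum (fun m => (m:ℝ) * c m)
        (fun m => mul_nonneg m.cast_nonneg (hc m)) h n
    linarith

lemma wshift_sum_le (c : ℕ → ℝ) (hc : ∀ m, 0 ≤ c m)
    (h : Summable (fun m : ℕ => (m:ℝ) * c m)) (n : ℕ) :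
    ∑ i ∈ Finset.range n, (i:ℝ) * c (i-1) ≤ c 0 + 2 * ∑' m : ℕ, (m:ℝ) * c m := by
  have hT : 0 ≤ ∑' m : ℕ, (m:ℝ) * c m :=
    tsum_nonneg (fun m => mul_nonneg m.cast_nonneg (hc m))
  cases n with
  | zero => simp; linarith [hc 0]
  | succ n =>
    rw [Finset.sum_range_succ']
    have heq : ∀ i ∈ Finset.range n, (((i+1 : ℕ)):ℝ) * c ((i+1)-1) = (i:ℝ) * c i + c i := by
      intro i _
      simp only [Nat.add_sub_cancel]
      push_cast
      ring
    have h2 : ∑ i ∈ Finset.range n, (((i+1 : ℕ)):ℝ) * c ((i+1)-1)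
        = ∑ i ∈ Finset.range n, (i:ℝ) * c i + ∑ i ∈ Finset.range n, c i := by
      rw [← Finset.sum_add_distrib]
      exact Finset.sum_congr rfl heq
    have h3 := wsum_le_tsum c hc h n
    have h4 := plain_sum_le c hc h n
    simp only [Nat.cast_zero, zero_mul, add_zero] at *
    rw [h2]
    linarith

end Aux

/-- `φ` (with effective domain `domφ` and gradient map `gφ`) is essentially smooth. -/
def EssentiallySmooth {E : Type*} [NormedAddCommGroup E] [InnerProductSpace ℝ E]
    [FiniteDimensional ℝ E] (φ : E → ℝ) (domφ : Set E) (gφ : E → E) : Prop :=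
  (interior domφ).Nonempty ∧
  (∀ x ∈ interior domφ, HasGradientAt φ (gφ x) x) ∧
  ∀ (u : ℕ → E) (u₀ : E), (∀ n, u n ∈ interior domφ) →
    Tendsto u atTop (𝓝 u₀) → u₀ ∈ frontier (interior domφ) →
    Tendsto (fun n => ‖gφ (u n)‖) atTop atTop

/-- The standing assumptions (Assumption A) for the problem `inf {P x + f x : x ∈ Q}`. -/
structure Standing {E : Type*} [NormedAddCommGroup E] [InnerProductSpace ℝ E]
    [FiniteDimensional ℝ E] (Q domφ domP domf X : Set E)
    (φ P f : E → ℝ) (gφ gf : E → E) (L : ℝ) : Prop where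
  hQclosed : IsClosed Q
  hQconv : Convex ℝ Q
  hQint : (interior Q).Nonempty
  hφconv : ConvexOn ℝ domφ φ
  hφstrict : StrictConvexOn ℝ (interior domφ) φ
  hφsmooth : EssentiallySmooth φ domφ gφ
  hφQ : closure domφ = Q
  hPne : domP.Nonempty
  hPconv : ConvexOn ℝ domP P
  hPclosed : LowerSemicontinuous (extFun P domP)
  hPQ : (domP ∩ interior Q).Nonempty
  hfconv : ConvexOn ℝ domf f
  hfclosed : LowerSemicontinuous (extFun f domf)
  hfdom : domφ ⊆ domf
  hfgrad : ∀ x ∈ interior domφ, HasGradientAt f (gf x) x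
  hXclosed : IsClosed X
  hXconv : Convex ℝ X
  hXsup : domP ∩ domφ ⊆ X
  hLnn : 0 ≤ L
  hrel : ∀ u ∈ interior domφ ∩ X, ∀ v ∈ domφ ∩ X,
    f v ≤ f u + ⟪gf u, v - u⟫ + L * breg φ gφ v u

/-- The iBPG iterates with inexactness tolerance sequences `η`, `μ`, `ν`. -/
structure IBPGIter {E : Type*} [NormedAddCommGroup E] [InnerProductSpace ℝ E]
    [FiniteDimensional ℝ E] (domφ domP X : Set E) (φ P : E → ℝ) (gφ gf : E → E) (L : ℝ)
    (η μ ν : ℕ → ℝ) (x xt : ℕ → E) : Prop where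
  hη : ∀ k, 0 ≤ η k
  hμ : ∀ k, 0 ≤ μ k
  hν : ∀ k, 0 ≤ ν k
  hx : ∀ k, x k ∈ X ∩ interior domφ
  hxt : ∀ k, xt k ∈ domP ∩ domφ
  hinex : ∀ k, ∃ d ∈ nuSubdiff P domP (ν k) (xt (k+1)),
    ‖d + gf (x k) + L • (gφ (x (k+1)) - gφ (x k))‖ ≤ η k
  hdist : ∀ k, breg φ gφ (xt (k+1)) (x (k+1)) ≤ μ k

/-- **O(1/k) iteration complexity of iBPG at the last iterate** (Theorem 3.1(v)). Under the
standing assumptions, if `Σ_k k·η_k (‖x̃^{k+1}‖+‖x̃^k‖+1) < ∞`, `Σ_k k·μ_k < ∞`,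
`Σ_k k·ν_k < ∞`, and the problem has an optimal solution `x* ∈ dom φ`, then there is `C ≥ 0`
with `F(x̃^k) − F* ≤ C/k` for all `k ≥ 1`, where `F = P + f`. -/
theorem iBPG_last_iteration_complexity
    {E : Type*} [NormedAddCommGroup E] [InnerProductSpace ℝ E] [FiniteDimensional ℝ E]
    (Q domφ domP domf X : Set E) (φ P f : E → ℝ) (gφ gf : E → E) (L : ℝ)
    (hstand : Standing Q domφ domP domf X φ P f gφ gf L)
    (η μ ν : ℕ → ℝ) (x xt : ℕ → E)
    (hiter : IBPGIter domφ domP X φ P gφ gf L η μ ν x xt)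
    (Fstar : ℝ) (hFstar : IsGLB ((fun u => P u + f u) '' (domP ∩ domf ∩ Q)) Fstar)
    (h1 : Summable (fun k : ℕ => (k : ℝ) * η k * (‖xt (k+1)‖ + ‖xt k‖ + 1)))
    (h2 : Summable (fun k : ℕ => (k : ℝ) * μ k)) (h3 : Summable (fun k : ℕ => (k : ℝ) * ν k))
    (xstar : E) (hxstar : xstar ∈ domP ∩ domφ)
    (hopt : ∀ u ∈ domP ∩ domf ∩ Q, P xstar + f xstar ≤ P u + f u) :
    ∃ C : ℝ, 0 ≤ C ∧ ∀ k : ℕ, 1 ≤ k →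
      (P (xt k) + f (xt k)) - Fstar ≤ C / (k : ℝ) := by
  obtain ⟨hη, hμ, hν, hx, hxt, hinex, hdist⟩ := hiter
  have hQsub : domφ ⊆ Q := hstand.hφQ ▸ subset_closure
  have hfeas : ∀ z, z ∈ domP ∩ domφ → z ∈ domP ∩ domf ∩ Q :=
    fun z hz => ⟨⟨hz.1, hstand.hfdom hz.2⟩, hQsub hz.2⟩
  have hLnn := hstand.hLnn
  have hFs : Fstar = P xstar + f xstar := by
    refine le_antisymm (hFstar.1 ⟨xstar, hfeas _ hxstar, rfl⟩) (hFstar.2 ?_)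
    rintro y ⟨u, hu, rfl⟩
    exact hopt u hu
  set a : ℕ → ℝ := fun k => P (xt k) + f (xt k) - (P xstar + f xstar) with ha_def
  have ha : ∀ k, 0 ≤ a k := fun k => sub_nonneg.2 (hopt _ (hfeas _ (hxt k)))
  have hbregnn : ∀ z ∈ domφ, ∀ j : ℕ, 0 ≤ breg φ gφ z (x j) := by
    intro z hz j
    have hgi := grad_ineq hstand.hφconv (interior_subset (hx j).2) hz
      (hstand.hφsmooth.2.1 _ (hx j).2)
    simp only [breg]
    linarith
  -- per-step key inequality
  have hkey : ∀ (k : ℕ), ∀ u ∈ domP ∩ domφ,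
      P (xt (k+1)) + f (xt (k+1)) ≤ P u + f u
        + L * breg φ gφ u (x k) - L * breg φ gφ u (x (k+1))
        + L * μ k + η k * (‖xt (k+1)‖ + ‖u‖) + ν k := by
    intro k u hu
    obtain ⟨d, hdsub, hdnorm⟩ := hinex k
    set Δ : E := d + gf (x k) + L • (gφ (x (k+1)) - gφ (x k)) with hΔdef
    have hP := hdsub u hu.1
    have hxtk : xt (k+1) ∈ domφ ∩ X := ⟨(hxt (k+1)).2, hstand.hXsup (hxt (k+1))⟩
    have hxk : x k ∈ interior domφ ∩ X := ⟨(hx k).2, (hx k).1⟩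
    have hf1 := hstand.hrel (x k) hxk (xt (k+1)) hxtk
    have hf2 : f (x k) + ⟪gf (x k), u - x k⟫ ≤ f u :=
      grad_ineq hstand.hfconv (hstand.hfdom (interior_subset (hx k).2))
        (hstand.hfdom hu.2) (hstand.hfgrad _ (hx k).2)
    have h3pL : L * ⟪gφ (x (k+1)) - gφ (x k), u - xt (k+1)⟫ =
        L * breg φ gφ u (x k) - L * breg φ gφ u (x (k+1))
          - L * breg φ gφ (xt (k+1)) (x k) + L * breg φ gφ (xt (k+1)) (x (k+1)) := by
      rw [three_point φ gφ (x (k+1)) (x k) (xt (k+1)) u]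
      ring
    have hdd : ⟪d, u - xt (k+1)⟫ = ⟪Δ, u - xt (k+1)⟫ - ⟪gf (x k), u - xt (k+1)⟫
        - L * ⟪gφ (x (k+1)) - gφ (x k), u - xt (k+1)⟫ := by
      have hd_eq : d = Δ - gf (x k) - L • (gφ (x (k+1)) - gφ (x k)) := by
        rw [hΔdef]; abel
      rw [hd_eq]
      simp [inner_sub_left, real_inner_smul_left]
    have hgfsplit : ⟪gf (x k), xt (k+1) - x k⟫ =
        ⟪gf (x k), u - x k⟫ - ⟪gf (x k), u - xt (k+1)⟫ := by
      simp only [inner_sub_right]; ring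
    have hΔb : -⟪Δ, u - xt (k+1)⟫ ≤ η k * (‖xt (k+1)‖ + ‖u‖) := by
      have h1' : -⟪Δ, u - xt (k+1)⟫ ≤ ‖Δ‖ * ‖u - xt (k+1)‖ := by
        have habs := abs_real_inner_le_norm Δ (u - xt (k+1))
        have hneg := neg_abs_le ⟪Δ, u - xt (k+1)⟫
        rw [abs_le] at habs
        linarith
      have h2' : ‖Δ‖ * ‖u - xt (k+1)‖ ≤ η k * (‖xt (k+1)‖ + ‖u‖) := by
        have hn : ‖u - xt (k+1)‖ ≤ ‖u‖ + ‖xt (k+1)‖ := norm_sub_le _ _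
        have := mul_le_mul hdnorm hn (norm_nonneg _) (hη k)
        linarith
      linarith
    have hmu : L * breg φ gφ (xt (k+1)) (x (k+1)) ≤ L * μ k :=
      mul_le_mul_of_nonneg_left (hdist k) hLnn
    linarith [hP, hf1, hf2, hdd, hgfsplit, hΔb, hmu, h3pL]
  -- tolerance sequences
  set cη : ℕ → ℝ := fun k => η k * (‖xt (k+1)‖ + ‖xt k‖ + 1) with hcη_def
  have hcηnn : ∀ k, 0 ≤ cη k := by
    intro k
    simp only [hcη_def]
    have := hη k
    positivity
  have h1' : Summable (fun k : ℕ => (k:ℝ) * cη k) := by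
    simp only [hcη_def]
    simpa [mul_assoc] using h1
  set T1 : ℝ := ∑' k : ℕ, (k:ℝ) * cη k with hT1_def
  set T2 : ℝ := ∑' k : ℕ, (k:ℝ) * μ k with hT2_def
  set T3 : ℝ := ∑' k : ℕ, (k:ℝ) * ν k with hT3_def
  have hT1nn : 0 ≤ T1 := tsum_nonneg (fun m => mul_nonneg m.cast_nonneg (hcηnn m))
  have hT2nn : 0 ≤ T2 := tsum_nonneg (fun m => mul_nonneg m.cast_nonneg (hμ m))
  have hT3nn : 0 ≤ T3 := tsum_nonneg (fun m => mul_nonneg m.cast_nonneg (hν m))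
  have hKnn : (0:ℝ) ≤ 1 + ‖xstar‖ := by positivity
  set ε : ℕ → ℝ := fun k => L * μ k + ν k + (1 + ‖xstar‖) * cη k with hε_def
  set δ : ℕ → ℝ := fun k => L * μ (k-1) + L * μ k + ν k + cη k with hδ_def
  have hεnn : ∀ k, 0 ≤ ε k := by
    intro k
    simp only [hε_def]
    have := mul_nonneg hLnn (hμ k)
    have := mul_nonneg hKnn (hcηnn k)
    have := hν k
    linarith
  -- descent toward xstar
  have hstar : ∀ k : ℕ, a (k+1) ≤
      L * breg φ gφ xstar (x k) - L * breg φ gφ xstar (x (k+1)) + ε k := by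
    intro k
    have h := hkey k xstar hxstar
    have hη' : η k * (‖xt (k+1)‖ + ‖xstar‖) ≤ (1 + ‖xstar‖) * cη k := by
      simp only [hcη_def]
      nlinarith [hη k, mul_nonneg (hη k) (norm_nonneg (xt k)),
        mul_nonneg (mul_nonneg (hη k) (norm_nonneg xstar)) (norm_nonneg (xt (k+1))),
        mul_nonneg (mul_nonneg (hη k) (norm_nonneg xstar)) (norm_nonneg (xt k))]
    simp only [hε_def, ha_def]
    linarith
  -- quasi-monotonicity
  have hmono : ∀ k : ℕ, 1 ≤ k → a (k+1) ≤ a k + δ k := by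
    intro k hk
    have h := hkey k (xt k) (hxt k)
    have hb1 : breg φ gφ (xt k) (x k) ≤ μ (k-1) := by
      have hd' := hdist (k-1)
      have hkk : k - 1 + 1 = k := Nat.succ_pred_eq_of_pos hk
      rwa [hkk] at hd'
    have hb1' : L * breg φ gφ (xt k) (x k) ≤ L * μ (k-1) :=
      mul_le_mul_of_nonneg_left hb1 hLnn
    have hb2 : 0 ≤ L * breg φ gφ (xt k) (x (k+1)) :=
      mul_nonneg hLnn (hbregnn _ (hxt k).2 (k+1))
    have hb3 : η k * (‖xt (k+1)‖ + ‖xt k‖) ≤ cη k := by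
      simp only [hcη_def]
      nlinarith [hη k]
    simp only [hδ_def, ha_def]
    linarith
  -- Claim A : telescoping sum
  have hA : ∀ k : ℕ, (∑ j ∈ Finset.range k, a (j+1)) + L * breg φ gφ xstar (x k)
      ≤ L * breg φ gφ xstar (x 0) + ∑ j ∈ Finset.range k, ε j := by
    intro k
    induction k with
    | zero => simp
    | succ n ih =>
      rw [Finset.sum_range_succ, Finset.sum_range_succ]
      have := hstar n
      linarith
  -- Claim B : weighted last-iterate bound
  have hB : ∀ k : ℕ, 1 ≤ k → (k:ℝ) * a k ≤
      (∑ j ∈ Finset.range k, a (j+1)) + ∑ i ∈ Finset.range k, (i:ℝ) * δ i := by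
    intro k hk
    induction k, hk using Nat.le_induction with
    | base => simp [Finset.sum_range_one]
    | succ n hn ih =>
      rw [Finset.sum_range_succ, Finset.sum_range_succ]
      have h1'' := hmono n hn
      have h2'' : (n:ℝ) * a (n+1) ≤ (n:ℝ) * (a n + δ n) :=
        mul_le_mul_of_nonneg_left h1'' n.cast_nonneg
      push_cast
      nlinarith [ih, h2'']
  -- Bounding the ε-sums
  have hEb : ∀ k : ℕ, ∑ j ∈ Finset.range k, ε j
      ≤ ε 0 + (L * T2 + T3 + (1 + ‖xstar‖) * T1) := by
    intro k
    have hLT2 : 0 ≤ L * T2 := mul_nonneg hLnn hT2nn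
    have hKT1 : 0 ≤ (1 + ‖xstar‖) * T1 := mul_nonneg hKnn hT1nn
    cases k with
    | zero => simp; linarith [hεnn 0]
    | succ n =>
      rw [Finset.sum_range_succ']
      have hterm : ∀ j ∈ Finset.range n, ε (j+1) ≤
          L * (((j+1:ℕ)):ℝ) * μ (j+1) + (((j+1:ℕ)):ℝ) * ν (j+1)
            + (1 + ‖xstar‖) * ((((j+1:ℕ)):ℝ) * cη (j+1)) := by
        intro j _
        have h1le : (1:ℝ) ≤ (((j+1:ℕ)):ℝ) := by exact_mod_cast Nat.one_le_iff_ne_zero.mpr (Nat.succ_ne_zero j)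
        have hμ' : μ (j+1) ≤ (((j+1:ℕ)):ℝ) * μ (j+1) := le_mul_of_one_le_left (hμ _) h1le
        have hν' : ν (j+1) ≤ (((j+1:ℕ)):ℝ) * ν (j+1) := le_mul_of_one_le_left (hν _) h1le
        have hc' : cη (j+1) ≤ (((j+1:ℕ)):ℝ) * cη (j+1) := le_mul_of_one_le_left (hcηnn _) h1le
        have hLμ : L * μ (j+1) ≤ L * ((((j+1:ℕ)):ℝ) * μ (j+1)) :=
          mul_le_mul_of_nonneg_left hμ' hLnn
        have hKc : (1 + ‖xstar‖) * cη (j+1) ≤ (1 + ‖xstar‖) * ((((j+1:ℕ)):ℝ) * cη (j+1)) :=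
          mul_le_mul_of_nonneg_left hc' hKnn
        simp only [hε_def]
        push_cast at *
        linarith
      have hsum1 := Finset.sum_le_sum hterm
      have hsplit : ∑ j ∈ Finset.range n, (L * (((j+1:ℕ)):ℝ) * μ (j+1) + (((j+1:ℕ)):ℝ) * ν (j+1)
            + (1 + ‖xstar‖) * ((((j+1:ℕ)):ℝ) * cη (j+1)))
          = L * (∑ j ∈ Finset.range n, (((j+1:ℕ)):ℝ) * μ (j+1))
            + (∑ j ∈ Finset.range n, (((j+1:ℕ)):ℝ) * ν (j+1))
            + (1 + ‖xstar‖) * (∑ j ∈ Finset.range n, (((j+1:ℕ)):ℝ) * cη (j+1)) := by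
        rw [Finset.sum_add_distrib, Finset.sum_add_distrib, Finset.mul_sum, Finset.mul_sum]
        congr 2
        apply Finset.sum_congr rfl
        intro j _
        ring
      have hS2 : ∑ j ∈ Finset.range n, (((j+1:ℕ)):ℝ) * μ (j+1) ≤ T2 :=
        shift_sum_le_tsum (fun m => (m:ℝ) * μ m) (fun m => mul_nonneg m.cast_nonneg (hμ m)) h2 n
      have hS3 : ∑ j ∈ Finset.range n, (((j+1:ℕ)):ℝ) * ν (j+1) ≤ T3 :=
        shift_sum_le_tsum (fun m => (m:ℝ) * ν m) (fun m => mul_nonneg m.cast_nonneg (hν m)) h3 n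
      have hS1 : ∑ j ∈ Finset.range n, (((j+1:ℕ)):ℝ) * cη (j+1) ≤ T1 :=
        shift_sum_le_tsum (fun m => (m:ℝ) * cη m) (fun m => mul_nonneg m.cast_nonneg (hcηnn m)) h1' n
      have hLS2 := mul_le_mul_of_nonneg_left hS2 hLnn
      have hKS1 := mul_le_mul_of_nonneg_left hS1 hKnn
      linarith [hsum1, hsplit.le, hsplit.ge]
  -- Bounding the δ-sums
  have hWb : ∀ k : ℕ, ∑ i ∈ Finset.range k, (i:ℝ) * δ i
      ≤ L * (μ 0 + 2 * T2) + L * T2 + T3 + T1 := by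
    intro k
    have hterm_eq : ∀ i ∈ Finset.range k, (i:ℝ) * δ i =
        L * ((i:ℝ) * μ (i-1)) + L * ((i:ℝ) * μ i) + (i:ℝ) * ν i + (i:ℝ) * cη i := by
      intro i _
      simp only [hδ_def]
      ring
    rw [Finset.sum_congr rfl hterm_eq, Finset.sum_add_distrib, Finset.sum_add_distrib,
      Finset.sum_add_distrib, ← Finset.mul_sum, ← Finset.mul_sum]
    have hW1 := wshift_sum_le μ hμ h2 k
    have hW2 := wsum_le_tsum μ hμ h2 k
    have hW3 := wsum_le_tsum ν hν h3 k
    have hW4 := wsum_le_tsum cη hcηnn h1' k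
    have hLW1 := mul_le_mul_of_nonneg_left hW1 hLnn
    have hLW2 := mul_le_mul_of_nonneg_left hW2 hLnn
    rw [← hT2_def] at hLW1 hLW2
    rw [← hT3_def] at hW3
    rw [← hT1_def] at hW4
    linarith
  -- conclusion
  refine ⟨L * breg φ gφ xstar (x 0) + (ε 0 + (L * T2 + T3 + (1 + ‖xstar‖) * T1))
      + (L * (μ 0 + 2 * T2) + L * T2 + T3 + T1), ?_, ?_⟩
  · have h01 : 0 ≤ L * breg φ gφ xstar (x 0) := mul_nonneg hLnn (hbregnn _ hxstar.2 0)
    have h02 : 0 ≤ L * T2 := mul_nonneg hLnn hT2nn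
    have h03 : 0 ≤ (1 + ‖xstar‖) * T1 := mul_nonneg hKnn hT1nn
    have h04 : 0 ≤ L * (μ 0 + 2 * T2) := mul_nonneg hLnn (by linarith [hμ 0])
    linarith [hεnn 0]
  · intro k hk
    have hkpos : (0:ℝ) < (k:ℝ) := by exact_mod_cast Nat.pos_of_ne_zero (by omega)
    have hak : P (xt k) + f (xt k) - Fstar = a k := by
      rw [hFs]
    rw [hak, le_div_iff₀ hkpos]
    have hBk := hB k hk
    have hAk := hA k
    have hEk := hEb k
    have hWk := hWb k
    have hDk : 0 ≤ L * breg φ gφ xstar (x k) := mul_nonneg hLnn (hbregnn _ hxstar.2 k)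
    nlinarith [hBk, hAk, hEk, hWk, hDk]
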